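/- A point y : Fin m → ℝ belongs to the image F = Set.range f of the quadratic map if and only if there exists a symmetric matrix X : Matrix (Fin (n+1)) (Fin (n+1)) ℝ with X.PosSemidef, X.rank = 1, X (Fin.last n) (Fin.last n) = 1, and (H k * X).trace = y k for every k : Fin m. -/

import Mathlib

open Matrix

lemma trace_mul_vecMulVec {p : Type*} [Fintype p] (M : Matrix p p ℝ) (u v : p → ℝ) :
    (M * vecMulVec u v).trace = v ⬝ᵥ M.mulVec u := by
  simp only [trace, Matrix.mul_apply, vecMulVec_apply, mulVec, dotProduct, diag_apply,
    Finset.mul_sum]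
  apply Finset.sum_congr rfl
  intro i _
  apply Finset.sum_congr rfl
  intro j _
  ring

lemma posSemidef_vecMulVec {p : Type*} [Fintype p] (v : p → ℝ) :
    (vecMulVec v v).PosSemidef := by
  rw [vecMulVec_eq (Fin 1)]
  have := posSemidef_conjTranspose_mul_self (replicateRow (Fin 1) v)
  rwa [conjTranspose_replicateRow, star_trivial] at this

lemma rank_vecMulVec_le {p : Type*} [Fintype p] [DecidableEq p] (u v : p → ℝ) :
    (vecMulVec u v).rank ≤ 1 := by
  rw [vecMulVec_eq (Fin 1)]
  exact le_trans (rank_mul_le_right _ _)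
    (le_trans (rank_le_card_height _) (by simp))

lemma rank_ne_zero_of_entry {p : Type*} [Fintype p] [DecidableEq p]
    (X : Matrix p p ℝ) (i j : p) (h : X i j ≠ 0) : X.rank ≠ 0 := by
  intro h0
  rw [Matrix.rank, Submodule.finrank_eq_zero] at h0
  have hmem : X.mulVec (Pi.single j 1) ∈ LinearMap.range X.mulVecLin :=
    ⟨Pi.single j 1, rfl⟩
  rw [h0, Submodule.mem_bot] at hmem
  have := congrFun hmem i
  rw [mulVec_single] at this
  simp at this
  exact h this

lemma dot_reindex {n : ℕ} (M : Matrix (Fin n ⊕ Fin 1) (Fin n ⊕ Fin 1) ℝ)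
    (z : Fin n ⊕ Fin 1 → ℝ) :
    (z ∘ finSumFinEquiv.symm) ⬝ᵥ
      (Matrix.reindex finSumFinEquiv finSumFinEquiv M).mulVec (z ∘ finSumFinEquiv.symm)
      = z ⬝ᵥ M.mulVec z := by
  rw [reindex_apply, submatrix_mulVec_equiv]
  have : (z ∘ finSumFinEquiv.symm) ∘ finSumFinEquiv.symm.symm = z := by
    ext s; simp
  rw [this]
  simp only [dotProduct]
  exact Fintype.sum_equiv finSumFinEquiv.symm _ _ (fun i => rfl)

lemma quad_block {n : ℕ} (A : Matrix (Fin n) (Fin n) ℝ) (b x : Fin n → ℝ) :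
    (Sum.elim x (fun _ => (1:ℝ))) ⬝ᵥ
      (Matrix.fromBlocks A (Matrix.replicateCol (Fin 1) b) (Matrix.replicateRow (Fin 1) b) 0).mulVec
        (Sum.elim x (fun _ => 1))
      = x ⬝ᵥ A.mulVec x + 2 * (b ⬝ᵥ x) := by
  rw [fromBlocks_mulVec, sumElim_dotProduct_sumElim]
  simp only [Function.comp_def, Sum.elim_inl, Sum.elim_inr, dotProduct_add,
    Matrix.zero_mulVec, add_zero]
  have h1 : x ⬝ᵥ (Matrix.replicateCol (Fin 1) b).mulVec (fun _ => (1:ℝ)) = b ⬝ᵥ x := by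
    simp [mulVec, dotProduct, mul_comm]
  have h2 : (fun _ : Fin 1 => (1:ℝ)) ⬝ᵥ (Matrix.replicateRow (Fin 1) b).mulVec x = b ⬝ᵥ x := by
    simp [mulVec, dotProduct]
  rw [h1, h2]
  ring

lemma last_eq {n : ℕ} : finSumFinEquiv (Sum.inr (0 : Fin 1)) = Fin.last n := by
  simp [finSumFinEquiv, Fin.last]
  ext; simp

theorem image_eq_rank_one_sdp (n m : ℕ)
    (A : Fin m → Matrix (Fin n) (Fin n) ℝ) (hA : ∀ k, (A k)ᵀ = A k)
    (b : Fin m → (Fin n → ℝ))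
    (f : (Fin n → ℝ) → (Fin m → ℝ))
    (hf : ∀ x k, f x k = x ⬝ᵥ (A k).mulVec x + 2 * (b k ⬝ᵥ x))
    (H : Fin m → Matrix (Fin (n + 1)) (Fin (n + 1)) ℝ)
    (hH : ∀ k, H k = Matrix.reindex finSumFinEquiv finSumFinEquiv
      (Matrix.fromBlocks (A k) (Matrix.replicateCol (Fin 1) (b k)) (Matrix.replicateRow (Fin 1) (b k)) 0))
    (y : Fin m → ℝ) :
    y ∈ Set.range f ↔
      ∃ X : Matrix (Fin (n + 1)) (Fin (n + 1)) ℝ,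
        X.PosSemidef ∧ X.rank = 1 ∧ X (Fin.last n) (Fin.last n) = 1 ∧
        ∀ k, (H k * X).trace = y k := by
  constructor
  · rintro ⟨x, rfl⟩
    set v : Fin (n+1) → ℝ := (Sum.elim x (fun _ => (1:ℝ))) ∘ finSumFinEquiv.symm with hv
    have hvlast : v (Fin.last n) = 1 := by
      rw [hv, ← last_eq (n := n)]
      simp
    refine ⟨vecMulVec v v, posSemidef_vecMulVec v, ?_, ?_, ?_⟩
    · refine le_antisymm (_root_.rank_vecMulVec_le v v) ?_
      have h1 : (vecMulVec v v) (Fin.last n) (Fin.last n) ≠ 0 := by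
        rw [vecMulVec_apply, hvlast]; norm_num
      exact Nat.one_le_iff_ne_zero.mpr (rank_ne_zero_of_entry _ _ _ h1)
    · rw [vecMulVec_apply, hvlast]; norm_num
    · intro k
      rw [trace_mul_vecMulVec, hH k, hv, dot_reindex, quad_block, hf]
  · rintro ⟨X, hPSD, hrank, hlast, htr⟩
    set v : Fin (n+1) → ℝ := fun i => X i (Fin.last n) with hv
    have hvlast : v (Fin.last n) = 1 := hlast
    have hvne : v ≠ 0 := fun h => by simp [h] at hvlast
    have hvmem : v ∈ LinearMap.range X.mulVecLin := by
      refine ⟨Pi.single (Fin.last n) 1, ?_⟩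
      ext i
      rw [mulVecLin_apply, mulVec_single]
      simp [hv]
    have hspan : LinearMap.range X.mulVecLin = Submodule.span ℝ {v} := by
      refine (Submodule.eq_of_le_of_finrank_le
        ((Submodule.span_singleton_le_iff_mem _ _).mpr hvmem) ?_).symm
      rw [finrank_span_singleton hvne]
      exact le_of_eq hrank
    have hXeq : ∀ i j, X i j = v i * v j := by
      intro i j
      have hcol : X.mulVec (Pi.single j 1) ∈ Submodule.span ℝ {v} := by
        rw [← hspan]; exact ⟨Pi.single j 1, rfl⟩
      obtain ⟨c, hc⟩ := Submodule.mem_span_singleton.mp hcol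
      have hci := congrFun hc i
      have hcl := congrFun hc (Fin.last n)
      rw [mulVec_single] at hci hcl
      simp only [Pi.smul_apply, smul_eq_mul, mul_one, MulOpposite.op_one, one_smul, col_apply] at hci hcl
      -- hci : c * v i = X i j; hcl : c * v (last) = X (last) j
      rw [hvlast, mul_one] at hcl
      have hsym : X (Fin.last n) j = v j := by
        have h3 : X j (Fin.last n) = X (Fin.last n) j := by
          simpa using hPSD.isHermitian.apply (Fin.last n) j
        exact h3.symm
      rw [← hci, hcl, hsym]
      ring
    have hX : X = vecMulVec v v := by
      ext i j; rw [vecMulVec_apply]; exact hXeq i j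
    set x : Fin n → ℝ := fun i => v (Fin.castSucc i) with hx
    have hvz : v = (Sum.elim x (fun _ => (1:ℝ))) ∘ finSumFinEquiv.symm := by
      ext i
      obtain ⟨s, rfl⟩ := finSumFinEquiv.surjective i
      cases s with
      | inl j =>
        simp [hx, Fin.castSucc]
      | inr j =>
        have : j = 0 := Subsingleton.elim _ _
        subst this
        rw [last_eq]
        simp [hvlast]
    refine ⟨x, ?_⟩
    ext k
    rw [hf, ← htr k, hX, trace_mul_vecMulVec, hH k, hvz, dot_reindex, quad_block]
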